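/- Fix N ≥ 1, k > 0 and h > 0, with vectors indexed cyclically by j ∈ ℤ/Nℤ. Let G : ℝ^N → ℝ^N be differentiable with each component G_j convex, each partial derivative ∂G_i/∂u_j locally Lipschitz, satisfying the numerical Poincaré inequality: there exists ϱ > 0 such that for all U, V ∈ ℝ^N, Σ_j ((u_j − u_{j+1})/h − (v_j − v_{j+1})/h)² ≤ ϱ Σ_j (G_j(U) − G_j(V) − ⟨∇G_j(V), U − V⟩), and satisfying translation invariance: G_j(U + s·𝟙) = G_j(U) for all U ∈ ℝ^N, s ∈ ℝ and j, where 𝟙 = (1,…,1). Let (M*, U*) ∈ ℝ^N × ℝ^N satisfy F̃(M*, U*) = 0 with all m*_j > 0 and (1/N)Σ_j m*_j = 1. Let (M, U) : [0, ∞) → ℝ^N × ℝ^N be a differentiable solution of the discrete Hessian Riemannian flow with all m_j(t) > 0, (1/N)Σ_j m_j(0) = 1, and Σ_j u_j(0) = Σ_j u*_j. Then for each j, u_j(t) → u*_j and m_j(t) → m*_j as t → ∞. -/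

import Mathlib

open Filter

/-- The discrete entropy-penalized effective Hamiltonian
`H̃(M,U) = (∑ᵢ (mᵢ Gᵢ(U) − (1/k) mᵢ ln mᵢ)) / (∑ᵢ mᵢ)`, cyclic indexing. -/
noncomputable def Htilde {N : ℕ} [NeZero N] (k : ℝ)
    (G : (ZMod N → ℝ) → (ZMod N → ℝ)) (M U : ZMod N → ℝ) : ℝ :=
  (∑ i, (M i * G U i - (1 / k) * (M i * Real.log (M i)))) / ∑ i, M i

/-- First block of `F̃(M,U)`: `(−Gᵢ(U) + H̃(M,U) + (1/k) ln mᵢ)ᵢ`. -/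
noncomputable def Ftilde1 {N : ℕ} [NeZero N] (k : ℝ)
    (G : (ZMod N → ℝ) → (ZMod N → ℝ)) (M U : ZMod N → ℝ) (i : ZMod N) : ℝ :=
  -(G U i) + Htilde k G M U + (1 / k) * Real.log (M i)

/-- Second block of `F̃(M,U)` (and of `F̄(M,U)`): the vector `DG(U)ᵀ M`. -/
noncomputable def Ftilde2 {N : ℕ} [NeZero N]
    (G : (ZMod N → ℝ) → (ZMod N → ℝ)) (M U : ZMod N → ℝ) (j : ZMod N) : ℝ :=
  ∑ i, M i * (fderiv ℝ G U) (Pi.single j 1) i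

/-- First block of `F̄(M,U)`: `(mᵢ(−Gᵢ(U) + H̃(M,U) + (1/k) ln mᵢ))ᵢ`. -/
noncomputable def Fbar1 {N : ℕ} [NeZero N] (k : ℝ)
    (G : (ZMod N → ℝ) → (ZMod N → ℝ)) (M U : ZMod N → ℝ) (i : ZMod N) : ℝ :=
  M i * Ftilde1 k G M U i

open Filter Set


lemma bregman_aux {E : Type*} [NormedAddCommGroup E] [NormedSpace ℝ E]
    {f : E → ℝ} (hc : ConvexOn ℝ Set.univ f) {v : E} {f' : E →L[ℝ] ℝ}
    (hd : HasFDerivAt f f' v) (u : E) : f v + f' (u - v) ≤ f u := by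
  set g : ℝ → ℝ := fun s => f (v + s • (u - v)) with hgdef
  have hgc : ConvexOn ℝ Set.univ g := by
    have h2 := hc.comp_affineMap (AffineMap.lineMap v u : ℝ →ᵃ[ℝ] E)
    have h3 : (f ∘ (AffineMap.lineMap v u : ℝ →ᵃ[ℝ] E)) = g := by
      funext s
      simp [hgdef, AffineMap.lineMap_apply, add_comm]
    rw [h3, Set.preimage_univ] at h2
    exact h2
  have hcurve : HasDerivAt (fun s : ℝ => v + s • (u - v)) (u - v) 0 := by
    simpa using ((hasDerivAt_id (0:ℝ)).smul_const (u - v)).const_add v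
  have hgd : HasDerivAt g (f' (u - v)) 0 := by
    have hd' : HasFDerivAt f f' ((fun s : ℝ => v + s • (u - v)) 0) := by simpa using hd
    exact hd'.comp_hasDerivAt 0 hcurve
  have hs := hgc.le_slope_of_hasDerivAt (Set.mem_univ 0) (Set.mem_univ 1) zero_lt_one hgd
  rw [slope_def_field] at hs
  have h0 : g 0 = f v := by simp [hgdef]
  have h1 : g 1 = f u := by simp [hgdef]
  rw [h0, h1] at hs
  have : f' (u - v) ≤ (f u - f v) / (1 - 0) := by
    simpa [div_eq_mul_inv] using hs
  linarith [this, (by norm_num : ((1:ℝ) - 0) = 1) ▸ this]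

lemma tendsto_of_control {f : ℝ → ℝ} {φ : ℝ → ℝ} {K : Set ℝ} (hK : IsCompact K)
    (hφ : ContinuousOn φ K) {a : ℝ}
    (hpos : ∀ x ∈ K, x ≠ a → 0 < φ x)
    (hf : ∀ᶠ t in atTop, f t ∈ K)
    (h0 : Tendsto (fun t => φ (f t)) atTop (nhds 0)) :
    Tendsto f atTop (nhds a) := by
  rw [Metric.tendsto_atTop]
  intro ε hε
  set C := K ∩ {x | ε ≤ |x - a|} with hC
  have hCc : IsCompact C :=
    hK.inter_right (isClosed_le continuous_const ((continuous_id.sub continuous_const).abs))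
  rcases C.eq_empty_or_nonempty with hE | hne
  · have : ∀ᶠ t in atTop, dist (f t) a < ε := by
      filter_upwards [hf] with t ht
      by_contra hcon
      push_neg at hcon
      have : f t ∈ C := ⟨ht, by rw [Real.dist_eq] at hcon; exact hcon⟩
      rw [hE] at this; exact absurd this (Set.notMem_empty _)
    rw [eventually_atTop] at this; exact this
  · obtain ⟨x0, hx0, hmin⟩ := hCc.exists_isMinOn hne (hφ.mono Set.inter_subset_left)
    have hx0ne : x0 ≠ a := by
      intro h
      have := hx0.2
      rw [h] at this; simp at this; linarith
    have hc : 0 < φ x0 := hpos x0 hx0.1 hx0ne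
    have hev : ∀ᶠ t in atTop, φ (f t) < φ x0 := h0.eventually_lt_const hc
    have : ∀ᶠ t in atTop, dist (f t) a < ε := by
      filter_upwards [hf, hev] with t ht hlt
      by_contra hcon
      push_neg at hcon
      have hmem : f t ∈ C := ⟨ht, by rw [Real.dist_eq] at hcon; exact hcon⟩
      exact absurd (hmin hmem) (not_le.2 hlt)
    rw [eventually_atTop] at this; exact this

noncomputable def phiAux (a x : ℝ) : ℝ := x - a - a * Real.log x + a * Real.log a

lemma phiAux_self (a : ℝ) : phiAux a a = 0 := by unfold phiAux; ring

lemma phiAux_nonneg {a x : ℝ} (ha : 0 < a) (hx : 0 < x) : 0 ≤ phiAux a x := by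
  have h := Real.log_le_sub_one_of_pos (div_pos hx ha)
  rw [Real.log_div hx.ne' ha.ne'] at h
  have h2 := mul_le_mul_of_nonneg_left h ha.le
  have h3 : a * (x / a - 1) = x - a := by field_simp
  unfold phiAux
  nlinarith [h2, h3]

lemma phiAux_pos {a x : ℝ} (ha : 0 < a) (hx : 0 < x) (hne : x ≠ a) : 0 < phiAux a x := by
  have hxa : x / a ≠ 1 := by
    intro h; exact hne (by field_simp at h; linarith)
  have h := Real.log_lt_sub_one_of_pos (div_pos hx ha) hxa
  rw [Real.log_div hx.ne' ha.ne'] at h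
  have h2 := mul_lt_mul_of_pos_left h ha
  have h3 : a * (x / a - 1) = x - a := by field_simp
  unfold phiAux
  nlinarith [h2, h3]

lemma phiAux_large {a C : ℝ} (ha : 0 < a) : ∃ δ > 0, ∀ x, 0 < x → x < δ → C < phiAux a x := by
  have hneg : Tendsto (fun x : ℝ => -Real.log x) (nhdsWithin 0 (Set.Ioi 0)) atTop :=
    tendsto_neg_atBot_atTop.comp Real.tendsto_log_nhdsGT_zero
  have hmul : Tendsto (fun x : ℝ => a * -Real.log x) (nhdsWithin 0 (Set.Ioi 0)) atTop :=
    hneg.const_mul_atTop ha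
  have hrest : Tendsto (fun x : ℝ => x - a + a * Real.log a) (nhdsWithin 0 (Set.Ioi 0))
      (nhds (0 - a + a * Real.log a)) := by
    apply Tendsto.mono_left _ nhdsWithin_le_nhds
    exact ((continuous_id.sub continuous_const).add continuous_const).tendsto 0
  have htot : Tendsto (fun x : ℝ => phiAux a x) (nhdsWithin 0 (Set.Ioi 0)) atTop := by
    have := hrest.add_atTop hmul
    apply this.congr
    intro x; unfold phiAux; ring
  have hev := htot.eventually_gt_atTop C
  rw [eventually_nhdsWithin_iff, Metric.eventually_nhds_iff] at hev
  obtain ⟨δ, hδ, h⟩ := hev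
  refine ⟨δ, hδ, fun x hx hxδ => h ?_ hx⟩
  rw [Real.dist_eq, sub_zero, abs_of_pos hx]; exact hxδ

lemma clm_apply_eq_sum {N : ℕ} [NeZero N] (L : (ZMod N → ℝ) →L[ℝ] (ZMod N → ℝ))
    (w : ZMod N → ℝ) (i : ZMod N) :
    L w i = ∑ j, w j * L (Pi.single j 1) i := by
  have hw : w = ∑ j, w j • (Pi.single j (1:ℝ) : ZMod N → ℝ) := by
    ext x
    simp [Pi.single_apply, Finset.sum_apply]
  conv_lhs => rw [hw]
  rw [map_sum]
  simp [Finset.sum_apply]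

lemma zmod_const_of_step {N : ℕ} [NeZero N] (w : ZMod N → ℝ)
    (h : ∀ j : ZMod N, w j = w (j + 1)) : ∀ j, w j = w 0 := by
  have hnat : ∀ n : ℕ, w (n : ZMod N) = w 0 := by
    intro n
    induction n with
    | zero => simp
    | succ m ih => rw [← ih]; push_cast; exact (h (m : ZMod N)).symm
  intro j
  obtain ⟨n, rfl⟩ := ZMod.natCast_zmod_surjective j
  exact hnat n

lemma fderiv_component {N : ℕ} [NeZero N] {G : (ZMod N → ℝ) → (ZMod N → ℝ)}
    (hGdiff : Differentiable ℝ G) (V : ZMod N → ℝ) (j : ZMod N) :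
    HasFDerivAt (fun X => G X j)
      ((ContinuousLinearMap.proj j).comp (fderiv ℝ G V)) V := by
  have := (ContinuousLinearMap.proj (R := ℝ) (φ := fun _ : ZMod N => ℝ) j).hasFDerivAt.comp V (hGdiff V).hasFDerivAt
  exact this

lemma fderiv_component_eq {N : ℕ} [NeZero N] {G : (ZMod N → ℝ) → (ZMod N → ℝ)}
    (hGdiff : Differentiable ℝ G) (V W : ZMod N → ℝ) (j : ZMod N) :
    fderiv ℝ (fun X => G X j) V W = fderiv ℝ G V W j := by
  rw [(fderiv_component hGdiff V j).fderiv]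
  rfl

lemma fderiv_ones_eq_zero {N : ℕ} [NeZero N] {G : (ZMod N → ℝ) → (ZMod N → ℝ)}
    (hGdiff : Differentiable ℝ G)
    (hGtrans : ∀ (U : ZMod N → ℝ) (s : ℝ) (j : ZMod N), G (U + fun _ => s) j = G U j)
    (U : ZMod N → ℝ) :
    fderiv ℝ G U (fun _ => (1:ℝ)) = 0 := by
  have hcurve : HasDerivAt (fun s : ℝ => U + s • (fun _ => (1:ℝ))) (fun _ => (1:ℝ)) 0 := by
    simpa using ((hasDerivAt_id (0:ℝ)).smul_const (fun _ => (1:ℝ))).const_add U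
  have hd : HasFDerivAt G (fderiv ℝ G U) ((fun s : ℝ => U + s • (fun _ => (1:ℝ))) 0) := by
    simpa using (hGdiff U).hasFDerivAt
  have hcomp : HasDerivAt (fun s : ℝ => G (U + s • (fun _ => (1:ℝ))))
      (fderiv ℝ G U (fun _ => (1:ℝ))) 0 := hd.comp_hasDerivAt 0 hcurve
  have hconst : (fun s : ℝ => G (U + s • (fun _ => (1:ℝ)))) = fun _ => G U := by
    funext s
    have : U + s • (fun _ => (1:ℝ)) = U + fun _ => s := by
      funext x; simp
    rw [this]
    funext j
    exact hGtrans U s j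
  rw [hconst] at hcomp
  have hzero : HasDerivAt (fun _ : ℝ => G U) (0 : ZMod N → ℝ) 0 := hasDerivAt_const 0 (G U)
  exact hcomp.unique hzero

-- given earlier (assume compiled): clm_apply_eq_sum etc.  For this test restate minimal:
lemma mul_log_sub_nonneg {x y : ℝ} (hx : 0 < x) (hy : 0 < y) :
    0 ≤ (x - y) * (Real.log x - Real.log y) := by
  rcases le_total x y with h | h
  · nlinarith [Real.log_le_log hx h]
  · nlinarith [Real.log_le_log hy h]

lemma hasDerivAt_phiAux {a : ℝ} {m : ℝ → ℝ} {m' : ℝ} {t : ℝ}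
    (hm : HasDerivAt m m' t) (hpos : m t ≠ 0) :
    HasDerivAt (fun s => phiAux a (m s)) ((1 - a / m t) * m') t := by
  have hlog : HasDerivAt (fun s => Real.log (m s)) ((m t)⁻¹ * m') t :=
    (Real.hasDerivAt_log hpos).comp t hm
  have h2 : HasDerivAt (fun s => m s - a - a * Real.log (m s) + a * Real.log a)
      (m' - a * ((m t)⁻¹ * m')) t :=
    ((hm.sub_const a).sub (hlog.const_mul a)).add_const _
  have h3 : (fun s => phiAux a (m s)) = fun s => m s - a - a * Real.log (m s) + a * Real.log a := by
    funext s; rfl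
  rw [h3]
  convert h2 using 1
  field_simp

lemma antitoneOn_aux {f f' : ℝ → ℝ} (hf : ∀ t, 0 ≤ t → HasDerivAt f (f' t) t)
    (hle : ∀ t, 0 ≤ t → f' t ≤ 0) : AntitoneOn f (Set.Ici 0) := by
  apply antitoneOn_of_deriv_nonpos (convex_Ici 0)
  · exact fun x hx => (hf x hx).continuousAt.continuousWithinAt
  · rw [interior_Ici]
    exact fun x hx => (hf x (le_of_lt hx)).differentiableAt.differentiableWithinAt
  · rw [interior_Ici]
    intro x hx
    rw [(hf x hx.le).deriv]
    exact hle x hx.le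

lemma const_of_deriv_aux {f f' : ℝ → ℝ} (hf : ∀ t, 0 ≤ t → HasDerivAt f (f' t) t)
    (h0 : ∀ t, 0 ≤ t → f' t = 0) : ∀ t, 0 ≤ t → f t = f 0 := by
  intro t ht
  have := constant_of_has_deriv_right_zero (f := f) (a := 0) (b := t)
    (fun x hx => (hf x hx.1).continuousAt.continuousWithinAt)
    (fun x hx => by
      have h := (hf x hx.1).hasDerivWithinAt (s := Set.Ici x)
      rwa [h0 x hx.1] at h)
  exact this t ⟨ht, le_refl t⟩

lemma decay_aux {f f' : ℝ → ℝ} {c : ℝ} (hf : ∀ t, 0 ≤ t → HasDerivAt f (f' t) t)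
    (hle : ∀ t, 0 ≤ t → f' t ≤ -c) : ∀ t, 0 ≤ t → f t ≤ f 0 - c * t := by
  have hg : ∀ t, 0 ≤ t → HasDerivAt (fun s => f s + c * s) (f' t + c) t := by
    intro t ht
    have hc : HasDerivAt (fun s : ℝ => c * s) c t := by
      simpa using (hasDerivAt_id t).const_mul c
    exact (hf t ht).add hc
  have ha := antitoneOn_aux hg (fun t ht => by linarith [hle t ht])
  intro t ht
  have := ha (Set.self_mem_Ici) ht ht
  simp only [mul_zero, add_zero] at this
  linarith

lemma sum_Fbar1_eq_zero {N : ℕ} [NeZero N] (k : ℝ)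
    (G : (ZMod N → ℝ) → (ZMod N → ℝ)) (Mv Uv : ZMod N → ℝ)
    (hpos : ∀ i, 0 < Mv i) : ∑ i, Fbar1 k G Mv Uv i = 0 := by
  have hS : 0 < ∑ i, Mv i := Finset.sum_pos (fun i _ => hpos i) Finset.univ_nonempty
  have hnum : Htilde k G Mv Uv * ∑ i, Mv i
      = ∑ i, (Mv i * G Uv i - (1 / k) * (Mv i * Real.log (Mv i))) := by
    rw [Htilde, div_mul_cancel₀ _ hS.ne']
  have expand : ∀ i ∈ Finset.univ, Fbar1 k G Mv Uv i =
      (Mv i * Htilde k G Mv Uv) - (Mv i * G Uv i - (1/k) * (Mv i * Real.log (Mv i))) := by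
    intro i _
    simp only [Fbar1, Ftilde1]
    ring
  rw [Finset.sum_congr rfl expand, Finset.sum_sub_distrib, ← Finset.sum_mul]
  rw [mul_comm] at hnum
  rw [hnum, sub_self]

lemma sum_pair_Ftilde2 {N : ℕ} [NeZero N]
    (G : (ZMod N → ℝ) → (ZMod N → ℝ)) (Mv Uv w : ZMod N → ℝ) :
    ∑ j, w j * Ftilde2 G Mv Uv j = ∑ i, Mv i * (fderiv ℝ G Uv) w i := by
  simp only [Ftilde2, Finset.mul_sum]
  rw [Finset.sum_comm]
  apply Finset.sum_congr rfl
  intro i _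
  rw [clm_apply_eq_sum (fderiv ℝ G Uv) w i, Finset.mul_sum]
  apply Finset.sum_congr rfl
  intro j _
  ring

lemma sum_Ftilde2_eq_zero {N : ℕ} [NeZero N]
    {G : (ZMod N → ℝ) → (ZMod N → ℝ)}
    (hGdiff : Differentiable ℝ G)
    (hGtrans : ∀ (U : ZMod N → ℝ) (s : ℝ) (j : ZMod N), G (U + fun _ => s) j = G U j)
    (Mv Uv : ZMod N → ℝ) : ∑ j, Ftilde2 G Mv Uv j = 0 := by
  have h := sum_pair_Ftilde2 G Mv Uv (fun _ => (1:ℝ))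
  simp only [one_mul] at h
  rw [h, fderiv_ones_eq_zero hGdiff hGtrans]
  simp

lemma eq_of_mul_log_eq_zero {x y : ℝ} (hx : 0 < x) (hy : 0 < y)
    (h : (x - y) * (Real.log x - Real.log y) = 0) : x = y := by
  rcases lt_trichotomy x y with hlt | heq | hgt
  · nlinarith [Real.log_lt_log hx hlt]
  · exact heq
  · nlinarith [Real.log_lt_log hy hgt]

noncomputable def DfunX {N : ℕ} [NeZero N] (Mstar Ustar : ZMod N → ℝ)
    (Mv Uv : ZMod N → ℝ) : ℝ :=
  (∑ i, phiAux (Mstar i) (Mv i)) + (1/2) * ∑ j, (Uv j - Ustar j)^2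

noncomputable def WfunX {N : ℕ} [NeZero N] (k : ℝ)
    (G : (ZMod N → ℝ) → (ZMod N → ℝ)) (Mstar Ustar : ZMod N → ℝ)
    (Mv Uv : ZMod N → ℝ) : ℝ :=
  (1/k) * (∑ i, (Mv i - Mstar i) * (Real.log (Mv i) - Real.log (Mstar i)))
    + ∑ i, Mstar i * (G Uv i - G Ustar i - (fderiv ℝ G Ustar) (Uv - Ustar) i)

/-- convergence of the discrete Hessian Riemannian flow: under convexity,
local Lipschitz continuity of the partial derivatives, the numerical Poincaré inequality and
translation invariance of `G`, a positive mass-one solution of the flow converges, as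
`t → ∞`, to the positive mass-one solution `(M*,U*)` of `F̃ = 0` (with matching mean of `U`). -/
theorem discrete_HRF_convergence
    (N : ℕ) [NeZero N] (k h : ℝ) (hk : 0 < k) (hh : 0 < h)
    (G : (ZMod N → ℝ) → (ZMod N → ℝ))
    (hGdiff : Differentiable ℝ G)
    (hGconv : ∀ j : ZMod N, ConvexOn ℝ Set.univ (fun U => G U j))
    (hGlip : ∀ i j : ZMod N,
      LocallyLipschitz (fun U => (fderiv ℝ G U) (Pi.single j 1) i))
    (hpoin : ∃ ϱ : ℝ, 0 < ϱ ∧ ∀ U V : ZMod N → ℝ,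
      ∑ j : ZMod N, ((U j - U (j + 1)) / h - (V j - V (j + 1)) / h) ^ 2
        ≤ ϱ * ∑ j : ZMod N,
            (G U j - G V j - fderiv ℝ (fun W => G W j) V (U - V)))
    (hGtrans : ∀ (U : ZMod N → ℝ) (s : ℝ) (j : ZMod N), G (U + fun _ => s) j = G U j)
    (Mstar Ustar : ZMod N → ℝ)
    (hMstarpos : ∀ j, 0 < Mstar j)
    (hstarmass : (1 / (N : ℝ)) * ∑ j, Mstar j = 1)
    (hstar1 : ∀ i, Ftilde1 k G Mstar Ustar i = 0)
    (hstar2 : ∀ j, Ftilde2 G Mstar Ustar j = 0)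
    (M U : ℝ → ZMod N → ℝ)
    (hflow : ∀ t, 0 ≤ t → ∀ j,
      HasDerivAt (fun s => M s j) (-(Fbar1 k G (M t) (U t) j)) t ∧
      HasDerivAt (fun s => U s j) (-(Ftilde2 G (M t) (U t) j)) t)
    (hMpos : ∀ t, 0 ≤ t → ∀ j, 0 < M t j)
    (hmass0 : (1 / (N : ℝ)) * ∑ j, M 0 j = 1)
    (humean0 : ∑ j, U 0 j = ∑ j, Ustar j) :
    ∀ j : ZMod N,
      Tendsto (fun t => U t j) atTop (nhds (Ustar j)) ∧
      Tendsto (fun t => M t j) atTop (nhds (Mstar j)) := by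
  obtain ⟨rho, hrho, hpoin⟩ := hpoin
  have hNpos : (0:ℝ) < (N:ℝ) := Nat.cast_pos.2 (Nat.pos_of_ne_zero (NeZero.ne N))
  have sumMstar : ∑ i, Mstar i = (N:ℝ) := by
    field_simp at hstarmass
    linarith
  have sumM0 : ∑ i, M 0 i = (N:ℝ) := by
    field_simp at hmass0
    linarith
  -- mass conservation
  have hmass : ∀ t, 0 ≤ t → ∑ i, M t i = (N:ℝ) := by
    have hconst : ∀ t, 0 ≤ t → (∑ i, M t i) = ∑ i, M 0 i := by
      apply const_of_deriv_aux (f' := fun t => ∑ i, -(Fbar1 k G (M t) (U t) i))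
      · intro t ht
        exact HasDerivAt.fun_sum (fun i _ => (hflow t ht i).1)
      · intro t ht
        rw [Finset.sum_neg_distrib, sum_Fbar1_eq_zero k G (M t) (U t) (hMpos t ht), neg_zero]
    intro t ht
    rw [hconst t ht, sumM0]
  -- mean conservation
  have hmean : ∀ t, 0 ≤ t → ∑ j, U t j = ∑ j, Ustar j := by
    have hconst : ∀ t, 0 ≤ t → (∑ j, U t j) = ∑ j, U 0 j := by
      apply const_of_deriv_aux (f' := fun t => ∑ j, -(Ftilde2 G (M t) (U t) j))
      · intro t ht
        exact HasDerivAt.fun_sum (fun j _ => (hflow t ht j).2)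
      · intro t ht
        rw [Finset.sum_neg_distrib, sum_Ftilde2_eq_zero hGdiff hGtrans (M t) (U t), neg_zero]
    intro t ht
    rw [hconst t ht, humean0]
  -- Bregman nonnegativity
  have hBr : ∀ (V X : ZMod N → ℝ) (i : ZMod N),
      0 ≤ G X i - G V i - (fderiv ℝ G V) (X - V) i := by
    intro V X i
    have := bregman_aux (hGconv i) (fderiv_component hGdiff V i) X
    simp only [ContinuousLinearMap.coe_comp', Function.comp_apply,
      ContinuousLinearMap.proj_apply] at this
    linarith
  -- the Lyapunov function and its derivative
  set D : ℝ → ℝ := fun t => DfunX Mstar Ustar (M t) (U t) with hD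
  set Dp : ℝ → ℝ := fun t =>
    -(∑ i, (M t i - Mstar i) * Ftilde1 k G (M t) (U t) i)
      - ∑ j, (U t j - Ustar j) * Ftilde2 G (M t) (U t) j with hDp
  have hDer : ∀ t, 0 ≤ t → HasDerivAt D (Dp t) t := by
    intro t ht
    have hpart1 : HasDerivAt (fun s => ∑ i, phiAux (Mstar i) (M s i))
        (∑ i, (1 - Mstar i / M t i) * -(Fbar1 k G (M t) (U t) i)) t :=
      HasDerivAt.fun_sum fun i _ => hasDerivAt_phiAux (hflow t ht i).1 (hMpos t ht i).ne'
    have hpart2 : HasDerivAt (fun s => ∑ j, (U s j - Ustar j)^2)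
        (∑ j, ((2:ℕ):ℝ) * (U t j - Ustar j)^(2-1) * -(Ftilde2 G (M t) (U t) j)) t :=
      HasDerivAt.fun_sum fun j _ => ((hflow t ht j).2.sub_const (Ustar j)).pow 2
    have htot := hpart1.add (hpart2.const_mul (1/2 : ℝ))
    have hval : (∑ i, (1 - Mstar i / M t i) * -(Fbar1 k G (M t) (U t) i))
        + (1/2:ℝ) * (∑ j, ((2:ℕ):ℝ) * (U t j - Ustar j)^(2-1) * -(Ftilde2 G (M t) (U t) j))
        = Dp t := by
      have e1 : ∀ i ∈ Finset.univ, (1 - Mstar i / M t i) * -(Fbar1 k G (M t) (U t) i)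
          = -((M t i - Mstar i) * Ftilde1 k G (M t) (U t) i) := by
        intro i _
        have hm := (hMpos t ht i).ne'
        simp only [Fbar1]
        field_simp
      have e2 : ∀ j ∈ Finset.univ, ((2:ℕ):ℝ) * (U t j - Ustar j)^(2-1) * -(Ftilde2 G (M t) (U t) j)
          = -(2 * ((U t j - Ustar j) * Ftilde2 G (M t) (U t) j)) := by
        intro j _
        push_cast
        ring
      rw [Finset.sum_congr rfl e1, Finset.sum_congr rfl e2, Finset.sum_neg_distrib,
        Finset.sum_neg_distrib, ← Finset.mul_sum, hDp]
      ring
    exact hval ▸ htot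
  have hkey : ∀ t, 0 ≤ t → Dp t ≤ -(WfunX k G Mstar Ustar (M t) (U t)) := by
    intro t ht
    have e1 : ∀ i ∈ Finset.univ, (M t i - Mstar i) * Ftilde1 k G (M t) (U t) i
        = (-((M t i - Mstar i) * (G (U t) i - G Ustar i))
            + (1/k) * ((M t i - Mstar i) * (Real.log (M t i) - Real.log (Mstar i))))
          + (M t i - Mstar i) * (Htilde k G (M t) (U t) - Htilde k G Mstar Ustar) := by
      intro i _
      have hs := hstar1 i
      simp only [Ftilde1] at hs ⊢
      linear_combination (M t i - Mstar i) * hs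
    have sum1 : ∑ i, (M t i - Mstar i) * Ftilde1 k G (M t) (U t) i
        = -(∑ i, (M t i - Mstar i) * (G (U t) i - G Ustar i))
          + (1/k) * ∑ i, (M t i - Mstar i) * (Real.log (M t i) - Real.log (Mstar i)) := by
      rw [Finset.sum_congr rfl e1, Finset.sum_add_distrib, ← Finset.sum_mul]
      have hz : ∑ i, (M t i - Mstar i) = 0 := by
        rw [Finset.sum_sub_distrib, hmass t ht, sumMstar, sub_self]
      rw [hz, zero_mul, add_zero, Finset.sum_add_distrib, Finset.sum_neg_distrib,
        ← Finset.mul_sum]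
    have sum2 : ∑ j, (U t j - Ustar j) * Ftilde2 G (M t) (U t) j
        = ∑ i, M t i * (fderiv ℝ G (U t)) (U t - Ustar) i := by
      have h2 := sum_pair_Ftilde2 G (M t) (U t) (U t - Ustar)
      simp only [Pi.sub_apply] at h2
      exact h2
    have sum2s : ∑ i, Mstar i * (fderiv ℝ G Ustar) (U t - Ustar) i = 0 := by
      have h2 := sum_pair_Ftilde2 G Mstar Ustar (U t - Ustar)
      rw [← h2]
      apply Finset.sum_eq_zero
      intro j _
      rw [hstar2 j, mul_zero]
    have hLneg : ∀ i : ZMod N, (fderiv ℝ G (U t)) (Ustar - U t) i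
        = -((fderiv ℝ G (U t)) (U t - Ustar) i) := by
      intro i
      rw [show Ustar - U t = -(U t - Ustar) from (neg_sub _ _).symm, map_neg]
      simp
    have key2 : ∀ i ∈ Finset.univ,
        (M t i - Mstar i) * (G (U t) i - G Ustar i)
          - M t i * (fderiv ℝ G (U t)) (U t - Ustar) i
          + Mstar i * (fderiv ℝ G Ustar) (U t - Ustar) i
        = -(M t i * (G Ustar i - G (U t) i - (fderiv ℝ G (U t)) (Ustar - U t) i))
          - Mstar i * (G (U t) i - G Ustar i - (fderiv ℝ G Ustar) (U t - Ustar) i) := by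
      intro i _
      rw [hLneg i]
      ring
    have merged : ∑ i, ((M t i - Mstar i) * (G (U t) i - G Ustar i)
          - M t i * (fderiv ℝ G (U t)) (U t - Ustar) i
          + Mstar i * (fderiv ℝ G Ustar) (U t - Ustar) i)
        = -(∑ i, M t i * (G Ustar i - G (U t) i - (fderiv ℝ G (U t)) (Ustar - U t) i))
          - ∑ i, Mstar i * (G (U t) i - G Ustar i - (fderiv ℝ G Ustar) (U t - Ustar) i) := by
      rw [Finset.sum_congr rfl key2, Finset.sum_sub_distrib, Finset.sum_neg_distrib]
    have hsplit : ∑ i, ((M t i - Mstar i) * (G (U t) i - G Ustar i)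
          - M t i * (fderiv ℝ G (U t)) (U t - Ustar) i
          + Mstar i * (fderiv ℝ G Ustar) (U t - Ustar) i)
        = ∑ i, (M t i - Mstar i) * (G (U t) i - G Ustar i)
          - ∑ i, M t i * (fderiv ℝ G (U t)) (U t - Ustar) i
          + ∑ i, Mstar i * (fderiv ℝ G Ustar) (U t - Ustar) i := by
      rw [Finset.sum_add_distrib, Finset.sum_sub_distrib]
    have hBruNN : 0 ≤ ∑ i, M t i * (G Ustar i - G (U t) i - (fderiv ℝ G (U t)) (Ustar - U t) i) :=
      Finset.sum_nonneg fun i _ => mul_nonneg (hMpos t ht i).le (hBr (U t) Ustar i)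
    have hDpt : Dp t = -(∑ i, (M t i - Mstar i) * Ftilde1 k G (M t) (U t) i)
        - ∑ j, (U t j - Ustar j) * Ftilde2 G (M t) (U t) j := by rw [hDp]
    have hWt : WfunX k G Mstar Ustar (M t) (U t)
        = (1/k) * (∑ i, (M t i - Mstar i) * (Real.log (M t i) - Real.log (Mstar i)))
          + ∑ i, Mstar i * (G (U t) i - G Ustar i - (fderiv ℝ G Ustar) (U t - Ustar) i) := rfl
    rw [hDpt, sum1, sum2, hWt]
    linarith [merged, hsplit, sum2s, hBruNN]
  have hWnn : ∀ (Mv Uv : ZMod N → ℝ), (∀ i, 0 < Mv i) →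
      0 ≤ WfunX k G Mstar Ustar Mv Uv := by
    intro Mv Uv hpos
    unfold WfunX
    have h1 : 0 ≤ ∑ i, (Mv i - Mstar i) * (Real.log (Mv i) - Real.log (Mstar i)) :=
      Finset.sum_nonneg fun i _ => mul_log_sub_nonneg (hpos i) (hMstarpos i)
    have h2 : 0 ≤ ∑ i, Mstar i * (G Uv i - G Ustar i - (fderiv ℝ G Ustar) (Uv - Ustar) i) :=
      Finset.sum_nonneg fun i _ => mul_nonneg (hMstarpos i).le (hBr Ustar Uv i)
    have hk1 : 0 < 1/k := by positivity
    nlinarith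
  have hDnonneg : ∀ t, 0 ≤ t → 0 ≤ D t := by
    intro t ht
    have h1 : 0 ≤ ∑ i, phiAux (Mstar i) (M t i) :=
      Finset.sum_nonneg fun i _ => phiAux_nonneg (hMstarpos i) (hMpos t ht i)
    have h2 : 0 ≤ ∑ j, (U t j - Ustar j)^2 := Finset.sum_nonneg fun j _ => sq_nonneg _
    have : D t = (∑ i, phiAux (Mstar i) (M t i)) + (1/2) * ∑ j, (U t j - Ustar j)^2 := rfl
    rw [this]
    linarith
  have hAnti : AntitoneOn D (Set.Ici 0) := by
    apply antitoneOn_aux hDer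
    intro t ht
    have := hkey t ht
    have := hWnn (M t) (U t) (hMpos t ht)
    linarith
  have hDle : ∀ t, 0 ≤ t → D t ≤ D 0 := fun t ht => hAnti Set.self_mem_Ici ht ht
  -- pointwise bounds from D
  have hphile : ∀ t, 0 ≤ t → ∀ i, phiAux (Mstar i) (M t i) ≤ D t := by
    intro t ht i
    have h1 : ∀ i' ∈ Finset.univ, 0 ≤ phiAux (Mstar i') (M t i') :=
      fun i' _ => phiAux_nonneg (hMstarpos i') (hMpos t ht i')
    have h2 : 0 ≤ ∑ j, (U t j - Ustar j)^2 := Finset.sum_nonneg fun j _ => sq_nonneg _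
    have h3 := Finset.single_le_sum h1 (Finset.mem_univ i)
    have h4 : D t = (∑ i, phiAux (Mstar i) (M t i)) + (1/2) * ∑ j, (U t j - Ustar j)^2 := rfl
    rw [h4]
    linarith
  have hsqle : ∀ t, 0 ≤ t → ∀ j, (U t j - Ustar j)^2 ≤ 2 * D t := by
    intro t ht j
    have h1 : 0 ≤ ∑ i, phiAux (Mstar i) (M t i) :=
      Finset.sum_nonneg fun i _ => phiAux_nonneg (hMstarpos i) (hMpos t ht i)
    have h3 : (U t j - Ustar j)^2 ≤ ∑ j', (U t j' - Ustar j')^2 :=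
      Finset.single_le_sum (f := fun j' => (U t j' - Ustar j')^2)
        (fun j' _ => sq_nonneg _) (Finset.mem_univ j)
    have h4 : D t = (∑ i, phiAux (Mstar i) (M t i)) + (1/2) * ∑ j', (U t j' - Ustar j')^2 := rfl
    rw [h4] at *
    linarith
  -- upper bound on masses
  have hMle : ∀ t, 0 ≤ t → ∀ i, M t i ≤ (N:ℝ) := by
    intro t ht i
    rw [← hmass t ht]
    exact Finset.single_le_sum (fun i' _ => (hMpos t ht i').le) (Finset.mem_univ i)
  -- lower bound on masses
  obtain ⟨δ, hδpos, hMge⟩ : ∃ δ, 0 < δ ∧ ∀ t, 0 ≤ t → ∀ i, δ ≤ M t i := by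
    have hch : ∀ i : ZMod N, ∃ d, 0 < d ∧ ∀ x, 0 < x → x < d → D 0 < phiAux (Mstar i) x := by
      intro i
      obtain ⟨d, hd, hp⟩ := phiAux_large (a := Mstar i) (C := D 0) (hMstarpos i)
      exact ⟨d, hd, hp⟩
    choose δf hδf hδp using hch
    refine ⟨Finset.univ.inf' Finset.univ_nonempty δf, ?_, ?_⟩
    · rw [Finset.lt_inf'_iff]
      exact fun i _ => hδf i
    · intro t ht i
      by_contra hcon
      push_neg at hcon
      have hlt : M t i < δf i :=
        lt_of_lt_of_le hcon (Finset.inf'_le _ (Finset.mem_univ i))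
      have h1 := hδp i (M t i) (hMpos t ht i) hlt
      have h2 := hphile t ht i
      have h3 := hDle t ht
      linarith
  -- the main claim: D gets below any ε
  have hclaim : ∀ ε, 0 < ε → ∃ T, 0 ≤ T ∧ D T < ε := by
    intro ε hε
    by_contra hcon
    push_neg at hcon
    set R : ℝ := Real.sqrt (2 * D 0) with hR
    set K0 : Set ((ZMod N → ℝ) × (ZMod N → ℝ)) :=
      (Set.univ.pi fun _ => Set.Icc δ (N:ℝ)) ×ˢ
        (Set.univ.pi fun j => Set.Icc (Ustar j - R) (Ustar j + R)) with hK0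
    have hK0c : IsCompact K0 :=
      (isCompact_univ_pi fun _ => isCompact_Icc).prod
        (isCompact_univ_pi fun _ => isCompact_Icc)
    have hK0lb : ∀ p ∈ K0, ∀ i, δ ≤ p.1 i := by
      intro p hp i
      exact ((Set.mem_univ_pi.1 (Set.mem_prod.1 hp).1) i).1
    have hK0pos : ∀ p ∈ K0, ∀ i, (0:ℝ) < p.1 i :=
      fun p hp i => lt_of_lt_of_le hδpos (hK0lb p hp i)
    -- continuity of log of first components on K0
    have hlogc : ∀ i : ZMod N,
        ContinuousOn (fun p : (ZMod N → ℝ) × (ZMod N → ℝ) => Real.log (p.1 i)) K0 := by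
      intro i
      apply Real.continuousOn_log.comp ((continuous_apply i).comp continuous_fst).continuousOn
      intro p hp
      exact (hK0pos p hp i).ne'
    have hfstc : ∀ i : ZMod N,
        Continuous (fun p : (ZMod N → ℝ) × (ZMod N → ℝ) => p.1 i) :=
      fun i => (continuous_apply i).comp continuous_fst
    have hsndc : ∀ j : ZMod N,
        Continuous (fun p : (ZMod N → ℝ) × (ZMod N → ℝ) => p.2 j) :=
      fun j => (continuous_apply j).comp continuous_snd
    have hDcont : ContinuousOn
        (fun p : (ZMod N → ℝ) × (ZMod N → ℝ) => DfunX Mstar Ustar p.1 p.2) K0 := by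
      simp only [DfunX, phiAux]
      apply ContinuousOn.add
      · apply continuousOn_finset_sum
        intro i _
        exact (((hfstc i).continuousOn.sub continuousOn_const).sub
          (continuousOn_const.mul (hlogc i))).add continuousOn_const
      · apply Continuous.continuousOn
        exact continuous_const.mul (continuous_finset_sum _ fun j _ =>
          ((hsndc j).sub continuous_const).pow 2)
    have hWcont : ContinuousOn
        (fun p : (ZMod N → ℝ) × (ZMod N → ℝ) => WfunX k G Mstar Ustar p.1 p.2) K0 := by
      simp only [WfunX]
      apply ContinuousOn.add
      · apply ContinuousOn.mul continuousOn_const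
        apply continuousOn_finset_sum
        intro i _
        exact ((hfstc i).continuousOn.sub continuousOn_const).mul
          ((hlogc i).sub continuousOn_const)
      · apply Continuous.continuousOn
        apply continuous_finset_sum
        intro i _
        apply Continuous.mul continuous_const
        apply Continuous.sub
        · exact ((continuous_apply i).comp (hGdiff.continuous.comp continuous_snd)).sub
            continuous_const
        · exact (continuous_apply i).comp
            ((fderiv ℝ G Ustar).continuous.comp (continuous_snd.sub continuous_const))
    -- the constrained set
    set S : Set ((ZMod N → ℝ) × (ZMod N → ℝ)) :=
      {p | p ∈ K0 ∧ DfunX Mstar Ustar p.1 p.2 ∈ Set.Ici ε} ∩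
        ({p | ∑ i, p.1 i = (N:ℝ)} ∩ {p | ∑ j, p.2 j = ∑ j, Ustar j}) with hS
    have hSsub : S ⊆ K0 := fun p hp => hp.1.1
    have hSclosed : IsClosed S := by
      apply IsClosed.inter
      · exact hDcont.preimage_isClosed_of_isClosed hK0c.isClosed isClosed_Ici
      · apply IsClosed.inter
        · exact isClosed_eq (continuous_finset_sum _ fun i _ => hfstc i) continuous_const
        · exact isClosed_eq (continuous_finset_sum _ fun j _ => hsndc j) continuous_const
    have hScomp : IsCompact S := hK0c.of_isClosed_subset hSclosed hSsub
    -- the trajectory lies in S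
    have htraj : ∀ t, 0 ≤ t → (M t, U t) ∈ S := by
      intro t ht
      refine ⟨⟨Set.mem_prod.2 ⟨Set.mem_univ_pi.2 fun i => ⟨hMge t ht i, hMle t ht i⟩,
        Set.mem_univ_pi.2 fun j => ?_⟩, hcon t ht⟩, hmass t ht, hmean t ht⟩
      have h1 := hsqle t ht j
      have h2 := hDle t ht
      have h3 : (U t j - Ustar j)^2 ≤ 2 * D 0 := by linarith
      have h4 : |U t j - Ustar j| ≤ R := by
        rw [hR, ← Real.sqrt_sq_eq_abs]
        exact Real.sqrt_le_sqrt h3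
      rw [abs_le] at h4
      exact ⟨by linarith [h4.1], by linarith [h4.2]⟩
    have hSne : S.Nonempty := ⟨(M 0, U 0), htraj 0 le_rfl⟩
    obtain ⟨p0, hp0S, hp0min⟩ := hScomp.exists_isMinOn hSne (hWcont.mono hSsub)
    rw [isMinOn_iff] at hp0min
    have hp0pos : ∀ i, 0 < p0.1 i := fun i => hK0pos p0 hp0S.1.1 i
    -- the minimum value is positive
    have hcpos : 0 < WfunX k G Mstar Ustar p0.1 p0.2 := by
      by_contra hcneg
      push_neg at hcneg
      have q1 : ∀ i ∈ Finset.univ,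
          0 ≤ (p0.1 i - Mstar i) * (Real.log (p0.1 i) - Real.log (Mstar i)) :=
        fun i _ => mul_log_sub_nonneg (hp0pos i) (hMstarpos i)
      have q2 : ∀ i ∈ Finset.univ, 0 ≤ Mstar i *
          (G p0.2 i - G Ustar i - (fderiv ℝ G Ustar) (p0.2 - Ustar) i) :=
        fun i _ => mul_nonneg (hMstarpos i).le (hBr Ustar p0.2 i)
      have hs1 : 0 ≤ ∑ i, (p0.1 i - Mstar i) * (Real.log (p0.1 i) - Real.log (Mstar i)) :=
        Finset.sum_nonneg q1
      have hs2 : 0 ≤ ∑ i, Mstar i *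
          (G p0.2 i - G Ustar i - (fderiv ℝ G Ustar) (p0.2 - Ustar) i) :=
        Finset.sum_nonneg q2
      have hk1 : 0 < 1/k := by positivity
      have hW0 : WfunX k G Mstar Ustar p0.1 p0.2 =
          (1/k) * (∑ i, (p0.1 i - Mstar i) * (Real.log (p0.1 i) - Real.log (Mstar i)))
          + ∑ i, Mstar i * (G p0.2 i - G Ustar i - (fderiv ℝ G Ustar) (p0.2 - Ustar) i) := rfl
      rw [hW0] at hcneg
      have hz1 : ∑ i, (p0.1 i - Mstar i) * (Real.log (p0.1 i) - Real.log (Mstar i)) = 0 := by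
        nlinarith
      have hz2 : ∑ i, Mstar i *
          (G p0.2 i - G Ustar i - (fderiv ℝ G Ustar) (p0.2 - Ustar) i) = 0 := by
        nlinarith
      -- masses agree
      have hmeq : ∀ i, p0.1 i = Mstar i := by
        intro i
        have := (Finset.sum_eq_zero_iff_of_nonneg q1).1 hz1 i (Finset.mem_univ i)
        exact eq_of_mul_log_eq_zero (hp0pos i) (hMstarpos i) this
      -- Bregman terms vanish
      have hbreq : ∀ i, G p0.2 i - G Ustar i - (fderiv ℝ G Ustar) (p0.2 - Ustar) i = 0 := by
        intro i
        have h5 := (Finset.sum_eq_zero_iff_of_nonneg q2).1 hz2 i (Finset.mem_univ i)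
        rcases mul_eq_zero.1 h5 with h6 | h6
        · exact absurd h6 (hMstarpos i).ne'
        · exact h6
      -- Poincare forces equality of U up to constant
      have hpo := hpoin p0.2 Ustar
      have hpo2 : ∑ j : ZMod N, (G p0.2 j - G Ustar j
          - (fderiv ℝ (fun W => G W j) Ustar) (p0.2 - Ustar)) = 0 := by
        apply Finset.sum_eq_zero
        intro j _
        rw [fderiv_component_eq hGdiff]
        exact hbreq j
      rw [hpo2, mul_zero] at hpo
      have hsq0 : ∀ j : ZMod N,
          ((p0.2 j - p0.2 (j+1)) / h - (Ustar j - Ustar (j+1)) / h) ^ 2 = 0 := by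
        intro j
        have hnn : ∀ j' ∈ Finset.univ, (0:ℝ) ≤
            ((p0.2 j' - p0.2 (j'+1)) / h - (Ustar j' - Ustar (j'+1)) / h) ^ 2 :=
          fun j' _ => sq_nonneg _
        have := (Finset.sum_eq_zero_iff_of_nonneg hnn).1 (le_antisymm hpo (Finset.sum_nonneg hnn)) j (Finset.mem_univ j)
        exact this
      have hstep : ∀ j : ZMod N, (fun j => p0.2 j - Ustar j) j = (fun j => p0.2 j - Ustar j) (j+1) := by
        intro j
        have h6 := pow_eq_zero_iff (n := 2) (by norm_num) |>.1 (hsq0 j)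
        have h7 : (p0.2 j - p0.2 (j+1)) = (Ustar j - Ustar (j+1)) := by
          field_simp at h6
          linarith
        simp only
        linarith
      have hconstw := zmod_const_of_step (fun j => p0.2 j - Ustar j) hstep
      have hsumw : ∑ j : ZMod N, (p0.2 j - Ustar j) = 0 := by
        rw [Finset.sum_sub_distrib, hp0S.2.2, sub_self]
      have hw0 : p0.2 0 - Ustar 0 = 0 := by
        have h8 : ∑ j : ZMod N, (p0.2 j - Ustar j) = (N:ℝ) * (p0.2 0 - Ustar 0) := by
          rw [Finset.sum_congr rfl (fun j _ => hconstw j)]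
          simp [Finset.card_univ, ZMod.card]
          ring
        rw [h8] at hsumw
        rcases mul_eq_zero.1 hsumw with h9 | h9
        · exact absurd h9 hNpos.ne'
        · exact h9
      have hUeq : ∀ j, p0.2 j = Ustar j := by
        intro j
        have := hconstw j
        linarith [hw0]
      -- then DfunX at p0 is zero, contradicting ε ≤ DfunX p0
      have hD0 : DfunX Mstar Ustar p0.1 p0.2 = 0 := by
        unfold DfunX
        have t1 : ∑ i, phiAux (Mstar i) (p0.1 i) = 0 := by
          apply Finset.sum_eq_zero
          intro i _
          rw [hmeq i, phiAux_self]
        have t2 : ∑ j, (p0.2 j - Ustar j)^2 = 0 := by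
          apply Finset.sum_eq_zero
          intro j _
          rw [hUeq j, sub_self]
          ring
        rw [t1, t2]
        ring
      have := hp0S.1.2
      rw [hD0] at this
      simp only [Set.mem_Ici] at this
      linarith
    -- uniform decay and contradiction
    set c := WfunX k G Mstar Ustar p0.1 p0.2 with hc
    have hdec : ∀ t, 0 ≤ t → Dp t ≤ -c := by
      intro t ht
      have h1 := hkey t ht
      have h2 := hp0min (M t, U t) (htraj t ht)
      simp only at h2
      linarith
    have hdecay := decay_aux hDer hdec
    have hT : 0 ≤ D 0 / c + 1 := by
      have := hDnonneg 0 le_rfl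
      positivity
    have h9 := hdecay (D 0 / c + 1) hT
    have h10 := hDnonneg (D 0 / c + 1) hT
    have h11 : c * (D 0 / c + 1) = D 0 + c := by
      field_simp
    rw [h11] at h9
    linarith
  -- D tends to 0
  have hDto : Filter.Tendsto D Filter.atTop (nhds 0) := by
    rw [Metric.tendsto_atTop]
    intro ε hε
    obtain ⟨T, hT0, hT⟩ := hclaim ε hε
    refine ⟨T, fun t ht => ?_⟩
    have h1 : D t ≤ D T := hAnti (Set.mem_Ici.2 hT0) (Set.mem_Ici.2 (hT0.trans ht)) ht
    have h2 : 0 ≤ D t := hDnonneg t (hT0.trans ht)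
    rw [Real.dist_eq, abs_of_nonneg (by linarith)]
    linarith
  -- conclusions
  intro j
  constructor
  · have h1 : Filter.Tendsto (fun t => (U t j - Ustar j)^2) Filter.atTop (nhds 0) := by
      apply squeeze_zero' (g := fun t => 2 * D t)
        (Filter.Eventually.of_forall fun t => sq_nonneg _)
      · filter_upwards [Filter.eventually_ge_atTop (0:ℝ)] with t ht
        exact hsqle t ht j
      · simpa using hDto.const_mul (2:ℝ)
    have h2 : Filter.Tendsto (fun t => |U t j - Ustar j|) Filter.atTop (nhds 0) := by
      have h3 := (Real.continuous_sqrt.tendsto 0).comp h1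
      simp only [Function.comp_def, Real.sqrt_zero] at h3
      have h4 : (fun t => Real.sqrt ((U t j - Ustar j)^2)) = fun t => |U t j - Ustar j| := by
        funext t
        rw [Real.sqrt_sq_eq_abs]
      rwa [h4] at h3
    have h4 : Filter.Tendsto (fun t => U t j - Ustar j) Filter.atTop (nhds 0) := by
      rw [tendsto_zero_iff_abs_tendsto_zero]
      exact h2
    have h5 := h4.add_const (Ustar j)
    simpa using h5
  · apply tendsto_of_control (K := Set.Icc δ (N:ℝ)) isCompact_Icc
    · show ContinuousOn (fun x => x - Mstar j - Mstar j * Real.log x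
          + Mstar j * Real.log (Mstar j)) (Set.Icc δ (N:ℝ))
      refine ((continuousOn_id.sub continuousOn_const).sub
        (continuousOn_const.mul (Real.continuousOn_log.mono ?_))).add continuousOn_const
      intro x hx
      exact (lt_of_lt_of_le hδpos hx.1).ne'
    · intro x hx hne
      exact phiAux_pos (hMstarpos j) (lt_of_lt_of_le hδpos hx.1) hne
    · filter_upwards [Filter.eventually_ge_atTop (0:ℝ)] with t ht
      exact ⟨hMge t ht j, hMle t ht j⟩
    · apply squeeze_zero' (g := D)
      · filter_upwards [Filter.eventually_ge_atTop (0:ℝ)] with t ht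
        exact phiAux_nonneg (hMstarpos j) (hMpos t ht j)
      · filter_upwards [Filter.eventually_ge_atTop (0:ℝ)] with t ht
        exact hphile t ht j
      · exact hDto
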